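/- If a linear order ≺ on the edge set of an acyclic directed graph satisfies (Q₁) and the nesting condition (Q₂), then it satisfies (U₃): for any two vertices v₁ and v₂, if I(v₁) meets the convex hull of I(v₂) then conv(I(v₁)) ⊆ conv(I(v₂)), and if O(v₁) meets the convex hull of O(v₂) then conv(O(v₁)) ⊆ conv(O(v₂)). -/
import Mathlib

structure Digraph' (V E : Type) where
  s : E → V
  t : E → V

def conv {E : Type} [LinearOrder E] (X : Set E) : Set E :=
  {y | ∃ a ∈ X, ∃ b ∈ X, a ≤ y ∧ y ≤ b}

namespace Digraph'

variable {V E : Type} (G : Digraph' V E)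

/-- One edge can be followed by another. -/
def step (e f : E) : Prop := G.t e = G.s f

/-- The reachable order: a directed path starts with `e₁` and ends with `e₂`
(including the case `e₁ = e₂`). -/
def reach : E → E → Prop := Relation.ReflTransGen G.step

/-- No directed cycles. -/
def Acyclic : Prop := ∀ e, ¬ Relation.TransGen G.step e e

/-- Incoming edges of a vertex. -/
def I (v : V) : Set E := {e | G.t e = v}

/-- Outgoing edges of a vertex. -/
def O (v : V) : Set E := {e | G.s e = v}

/-- All edges incident to a vertex `v` (incoming or outgoing). -/
def Ev (v : V) : Set E := G.I v ∪ G.O v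

variable [LinearOrder E]

/-- (U₁): reachability implies order. -/
def U1 : Prop := ∀ e₁ e₂ : E, G.reach e₁ e₂ → e₁ ≤ e₂

/-- (U₂): for every vertex, the hulls of incoming and outgoing edges are disjoint and
together give the hull of all incident edges. -/
def U2 : Prop := ∀ v : V,
  conv (G.I v) ∩ conv (G.O v) = ∅ ∧ conv (G.Ev v) = conv (G.I v) ∪ conv (G.O v)

/-- (U₃). -/
def U3 : Prop := ∀ v₁ v₂ : V,
  ((G.I v₁ ∩ conv (G.I v₂)).Nonempty → conv (G.I v₁) ⊆ conv (G.I v₂)) ∧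
  ((G.O v₁ ∩ conv (G.O v₂)).Nonempty → conv (G.O v₁) ⊆ conv (G.O v₂))

/-- (Q₂), the nesting condition. -/
def Q2 : Prop := ∀ e₁ e e₂ : E, e₁ < e → e < e₂ →
  (G.t e₁ = G.t e₂ → G.I (G.t e) ⊆ conv (G.I (G.t e₁))) ∧
  (G.s e₁ = G.s e₂ → G.O (G.s e) ⊆ conv (G.O (G.s e₁))) ∧
  (G.t e₁ = G.s e₂ →
    G.I (G.t e) ⊆ conv (G.I (G.t e₁)) ∨ G.O (G.s e) ⊆ conv (G.O (G.s e₂)))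

end Digraph'

/-- If `X ⊆ conv Y` then `conv X ⊆ conv Y`. -/
lemma conv_subset_conv {E : Type} [LinearOrder E] {X Y : Set E}
    (h : X ⊆ conv Y) : conv X ⊆ conv Y := by
  rintro y ⟨a, ha, b, hb, hay, hyb⟩
  obtain ⟨a₂, ha₂, _, _, ha₂a, _⟩ := h ha
  obtain ⟨_, _, b₂, hb₂, _, hbb₂⟩ := h hb
  exact ⟨a₂, ha₂, b₂, hb₂, ha₂a.trans hay, hyb.trans hbb₂⟩

open Digraph' in
/-- (Q₁) and (Q₂) imply (U₃). -/
theorem U3_of_Q1_Q2 {V E : Type} [Fintype V] [Fintype E] [LinearOrder E]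
    (G : Digraph' V E) (hG : G.Acyclic) (hQ1 : G.U1) (hQ2 : G.Q2) :
    G.U3 := by
  intro v₁ v₂
  constructor
  · rintro ⟨e, he1, a, ha, b, hb, hae, heb⟩
    rcases eq_or_lt_of_le hae with rfl | hae'
    · have : v₁ = v₂ := by rw [← he1, ha]
      subst this; exact conv_subset_conv (fun x hx => ⟨x, hx, x, hx, le_rfl, le_rfl⟩)
    rcases eq_or_lt_of_le heb with rfl | heb'
    · have : v₁ = v₂ := by rw [← he1, hb]
      subst this; exact conv_subset_conv (fun x hx => ⟨x, hx, x, hx, le_rfl, le_rfl⟩)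
    · have h := (hQ2 a e b hae' heb').1 (by rw [ha, hb])
      rw [he1, ha] at h
      exact conv_subset_conv h
  · rintro ⟨e, he1, a, ha, b, hb, hae, heb⟩
    rcases eq_or_lt_of_le hae with rfl | hae'
    · have : v₁ = v₂ := by rw [← he1, ha]
      subst this; exact conv_subset_conv (fun x hx => ⟨x, hx, x, hx, le_rfl, le_rfl⟩)
    rcases eq_or_lt_of_le heb with rfl | heb'
    · have : v₁ = v₂ := by rw [← he1, hb]
      subst this; exact conv_subset_conv (fun x hx => ⟨x, hx, x, hx, le_rfl, le_rfl⟩)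
    · have h := (hQ2 a e b hae' heb').2.1 (by rw [ha, hb])
      rw [he1, ha] at h
      exact conv_subset_conv h
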